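/- Suppose (i) the preliminary estimators are strongly consistent: Θ̂_p^n → θ_t almost surely (under P₁); (ii) the nuisance estimators are strongly consistent: ϑ̂_i^n → ϑ_{t,i} almost surely (under P₁) for every i = 1,…,u; and (iii) there exists δ > 0 such that the refinement estimators are uniformly strongly consistent on the neighborhood Ω_δ: for P₂-almost every ω₂, sup_{(s,t) ∈ Ω_δ} |Θ̂_r^n(s,t,ω₂) − θ_t| → 0 as n → ∞. Then the composite two-stage estimator is strongly consistent: T_n → θ_t almost surely under P₁ ⊗ P₂. -/
import Mathlib


open MeasureTheory Filter Topology ENNReal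

/-- Strong consistency of the composite two-stage estimator: if the preliminary and
nuisance estimators are strongly consistent, and the refinement estimators are uniformly
strongly consistent on a neighborhood `Ω_δ` of the true parameters (for `P₂`-almost every
`ω₂`, `sup_{(s,t) ∈ Ω_δ} |Θ̂_r^n(s,t,ω₂) − θ_t| → 0`), then the composite two-stage
estimator `T_n(ω₁,ω₂) = Θ̂_r^n(Θ̂_p^n(ω₁), ϑ̂^n(ω₁), ω₂)` converges to `θ_t` almost
surely under `P₁ ⊗ P₂`. -/
theorem two_stage_strong_consistency
    {Ω₁ Ω₂ : Type*} [MeasurableSpace Ω₁] [MeasurableSpace Ω₂]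
    (P₁ : Measure Ω₁) [IsProbabilityMeasure P₁]
    (P₂ : Measure Ω₂) [IsProbabilityMeasure P₂]
    (u : ℕ) (θt : ℝ) (ϑt : Fin u → ℝ)
    (Θp : ℕ → Ω₁ → ℝ) (hΘp_meas : ∀ n, Measurable (Θp n))
    (ϑ : ℕ → Ω₁ → (Fin u → ℝ)) (hϑ_meas : ∀ n, Measurable (ϑ n))
    (Θr : ℕ → ℝ → (Fin u → ℝ) → Ω₂ → ℝ)
    (hΘr_meas : ∀ n,
      Measurable (fun p : ℝ × (Fin u → ℝ) × Ω₂ => Θr n p.1 p.2.1 p.2.2))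
    -- (i) strong consistency of the preliminary estimator
    (hpre : ∀ᵐ ω₁ ∂P₁, Tendsto (fun n => Θp n ω₁) atTop (𝓝 θt))
    -- (ii) strong consistency of each nuisance estimator
    (hnuis : ∀ i : Fin u,
      ∀ᵐ ω₁ ∂P₁, Tendsto (fun n => ϑ n ω₁ i) atTop (𝓝 (ϑt i)))
    -- (iii) uniform strong consistency of the refinement estimators on Ω_δ
    (href : ∃ δ > (0 : ℝ), ∀ᵐ ω₂ ∂P₂,
      TendstoUniformlyOn (fun n (p : ℝ × (Fin u → ℝ)) => Θr n p.1 p.2 ω₂)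
        (fun _ => θt) atTop
        {p : ℝ × (Fin u → ℝ) | |p.1 - θt| ≤ δ ∧ ∀ i, |p.2 i - ϑt i| ≤ δ}) :
    ∀ᵐ ω ∂(P₁.prod P₂),
      Tendsto (fun n => Θr n (Θp n ω.1) (ϑ n ω.1) ω.2) atTop (𝓝 θt) := by
  obtain ⟨δ, hδ, h₂⟩ := href
  have h₁ : ∀ᵐ ω₁ ∂P₁, Tendsto (fun n => Θp n ω₁) atTop (𝓝 θt) ∧
      ∀ i, Tendsto (fun n => ϑ n ω₁ i) atTop (𝓝 (ϑt i)) :=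
    hpre.and (ae_all_iff.2 hnuis)
  have H₁ := Measure.quasiMeasurePreserving_fst (μ := P₁) (ν := P₂) |>.ae h₁
  have H₂ := Measure.quasiMeasurePreserving_snd (μ := P₁) (ν := P₂) |>.ae h₂
  filter_upwards [H₁, H₂] with ω hω₁ hω₂
  obtain ⟨hp, hn⟩ := hω₁
  rw [Metric.tendsto_nhds]
  intro ε hε
  -- eventually the first-stage estimates are in the δ-box
  have hbox : ∀ᶠ n in atTop,
      (Θp n ω.1, ϑ n ω.1) ∈
        {p : ℝ × (Fin u → ℝ) | |p.1 - θt| ≤ δ ∧ ∀ i, |p.2 i - ϑt i| ≤ δ} := by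
    have h1 : ∀ᶠ n in atTop, |Θp n ω.1 - θt| ≤ δ := by
      have := (Metric.tendsto_atTop.1 hp) δ hδ
      obtain ⟨N, hN⟩ := this
      exact eventually_atTop.2 ⟨N, fun n hn' => le_of_lt (by
        simpa [Real.dist_eq] using hN n hn')⟩
    have h2 : ∀ᶠ n in atTop, ∀ i, |ϑ n ω.1 i - ϑt i| ≤ δ := by
      rw [eventually_all]
      intro i
      have := (Metric.tendsto_atTop.1 (hn i)) δ hδ
      obtain ⟨N, hN⟩ := this
      exact eventually_atTop.2 ⟨N, fun n hn' => le_of_lt (by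
        simpa [Real.dist_eq] using hN n hn')⟩
    filter_upwards [h1, h2] with n ha hb using ⟨ha, hb⟩
  have hunif := (Metric.tendstoUniformlyOn_iff.1 hω₂) ε hε
  filter_upwards [hbox, hunif] with n hb hu
  have := hu (Θp n ω.1, ϑ n ω.1) hb
  simpa [dist_comm] using this
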